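/- Maximum of Λ: the function Λ(t) := (1−t)^{t−1}(1+t)^{−1−t} t^2 on (0,1) attains a maximum value Λ* with 0.308 < Λ* < 0.309. -/

import Mathlib

noncomputable def Lam (t : ℝ) : ℝ :=
  Real.rpow (1 - t) (t - 1) * Real.rpow (1 + t) (-1 - t) * t ^ 2

noncomputable def Ff (t : ℝ) : ℝ :=
  (t - 1) * Real.log (1 - t) + (-1 - t) * Real.log (1 + t) + 2 * Real.log t

noncomputable def Ff' (t : ℝ) : ℝ := Real.log (1 - t) - Real.log (1 + t) + 2 / t

lemma hasDerivAt_Ff {t : ℝ} (h0 : 0 < t) (h1 : t < 1) : HasDerivAt Ff (Ff' t) t := by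
  have h1t : (1 : ℝ) - t ≠ 0 := by linarith
  have h2t : (1 : ℝ) + t ≠ 0 := by linarith
  have d1 : HasDerivAt (fun t : ℝ => Real.log (1 - t)) ((1 - t)⁻¹ * (-1)) t :=
    (Real.hasDerivAt_log h1t).comp t ((hasDerivAt_id t).const_sub 1)
  have d2 : HasDerivAt (fun t : ℝ => Real.log (1 + t)) ((1 + t)⁻¹ * 1) t :=
    (Real.hasDerivAt_log h2t).comp t ((hasDerivAt_id t).const_add 1)
  have A : HasDerivAt (fun t : ℝ => (t - 1) * Real.log (1 - t))
      (1 * Real.log (1 - t) + (t - 1) * ((1 - t)⁻¹ * (-1))) t :=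
    ((hasDerivAt_id t).sub_const 1).mul d1
  have B : HasDerivAt (fun t : ℝ => (-1 - t) * Real.log (1 + t))
      ((-1) * Real.log (1 + t) + (-1 - t) * ((1 + t)⁻¹ * 1)) t := by
    have hb : HasDerivAt (fun t : ℝ => -1 - t) (-1) t := (hasDerivAt_id t).const_sub (-1)
    exact hb.mul d2
  have C : HasDerivAt (fun t : ℝ => 2 * Real.log t) (2 * t⁻¹) t :=
    (Real.hasDerivAt_log (ne_of_gt h0)).const_mul 2
  have := (A.add B).add C
  refine this.congr_deriv ?_
  unfold Ff'
  field_simp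
  ring

lemma lam_eq {t : ℝ} (h0 : 0 < t) (h1 : t < 1) : Lam t = Real.exp (Ff t) := by
  have e1 : ((1 : ℝ) - t) ^ ((t - 1) : ℝ) = Real.exp ((t - 1) * Real.log (1 - t)) := by
    rw [Real.rpow_def_of_pos (by linarith)]; ring_nf
  have e2 : ((1 : ℝ) + t) ^ ((-1 - t) : ℝ) = Real.exp ((-1 - t) * Real.log (1 + t)) := by
    rw [Real.rpow_def_of_pos (by linarith)]; ring_nf
  have e3 : t ^ 2 = Real.exp (2 * Real.log t) := by
    have h : (2 : ℝ) * Real.log t = Real.log (t ^ 2) := by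
      rw [Real.log_pow]; norm_num
    rw [h, Real.exp_log (by positivity)]
  show ((1 : ℝ) - t) ^ ((t - 1) : ℝ) * ((1 : ℝ) + t) ^ ((-1 - t) : ℝ) * t ^ 2 = Real.exp (Ff t)
  unfold Ff
  rw [e1, e2, e3, ← Real.exp_add, ← Real.exp_add]

lemma Ff'_anti {a b : ℝ} (ha : 0 < a) (hab : a ≤ b) (hb : b < 1) : Ff' b ≤ Ff' a := by
  unfold Ff'
  have l1 : Real.log (1 - b) ≤ Real.log (1 - a) := by
    rw [Real.log_le_log_iff (by linarith) (by linarith)]; linarith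
  have l2 : Real.log (1 + a) ≤ Real.log (1 + b) := by
    rw [Real.log_le_log_iff (by linarith) (by linarith)]; linarith
  have l3 : 2 / b ≤ 2 / a := by
    apply div_le_div_of_nonneg_left (by norm_num) ha hab
  linarith

lemma log11_le : Real.log 11 ≤ 12 / 5 := by
  rw [Real.log_le_iff_le_exp (by norm_num)]
  apply le_of_pow_le_pow_left₀ (n := 5) (by norm_num) (Real.exp_pos _).le
  have h5 : Real.exp (12 / 5 : ℝ) ^ (5 : ℕ) = Real.exp 1 ^ (12 : ℕ) := by
    rw [← Real.exp_nat_mul, ← Real.exp_nat_mul]; norm_num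
  rw [h5]
  calc (11 : ℝ) ^ (5 : ℕ) ≤ 2.7182818283 ^ (12 : ℕ) := by norm_num
    _ ≤ Real.exp 1 ^ (12 : ℕ) := pow_le_pow_left₀ (by norm_num) Real.exp_one_gt_d9.le 12

lemma log11_ge : (239 / 100 : ℝ) ≤ Real.log 11 := by
  rw [Real.le_log_iff_exp_le (by norm_num)]
  apply le_of_pow_le_pow_left₀ (n := 100) (by norm_num) (by norm_num)
  have h5 : Real.exp (239 / 100 : ℝ) ^ (100 : ℕ) = Real.exp 1 ^ (239 : ℕ) := by
    rw [← Real.exp_nat_mul, ← Real.exp_nat_mul]; norm_num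
  rw [h5]
  calc Real.exp 1 ^ (239 : ℕ) ≤ 2.7182818286 ^ (239 : ℕ) :=
        pow_le_pow_left₀ (Real.exp_pos 1).le Real.exp_one_lt_d9.le 239
    _ ≤ (11 : ℝ) ^ (100 : ℕ) := by norm_num

lemma log23_2 : (50 / 21 : ℝ) ≤ Real.log (23 / 2) := by
  rw [Real.le_log_iff_exp_le (by norm_num)]
  apply le_of_pow_le_pow_left₀ (n := 21) (by norm_num) (by norm_num)
  have h5 : Real.exp (50 / 21 : ℝ) ^ (21 : ℕ) = Real.exp 1 ^ (50 : ℕ) := by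
    rw [← Real.exp_nat_mul, ← Real.exp_nat_mul]; norm_num
  rw [h5]
  calc Real.exp 1 ^ (50 : ℕ) ≤ 2.7182818286 ^ (50 : ℕ) :=
        pow_le_pow_left₀ (Real.exp_pos 1).le Real.exp_one_lt_d9.le 50
    _ ≤ ((23 : ℝ) / 2) ^ (21 : ℕ) := by norm_num

lemma Ff'_c1 : Ff' (5 / 6) = 12 / 5 - Real.log 11 := by
  unfold Ff'
  rw [show (1 : ℝ) - 5 / 6 = 6⁻¹ by norm_num, show (1 : ℝ) + 5 / 6 = 11 / 6 by norm_num,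
    Real.log_inv, Real.log_div (by norm_num) (by norm_num)]
  norm_num
  ring

lemma Ff'_c2 : Ff' (21 / 25) ≤ 0 := by
  have h : Ff' (21 / 25) = 50 / 21 - Real.log (23 / 2) := by
    unfold Ff'
    rw [show (1 : ℝ) - 21 / 25 = 4 / 25 by norm_num,
      show (1 : ℝ) + 21 / 25 = 46 / 25 by norm_num,
      Real.log_div (by norm_num) (by norm_num),
      Real.log_div (by norm_num) (by norm_num),
      Real.log_div (by norm_num) (by norm_num),
      show (4 : ℝ) = 2 * 2 by norm_num,
      show (46 : ℝ) = 23 * 2 by norm_num,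
      Real.log_mul (by norm_num) (by norm_num),
      Real.log_mul (by norm_num) (by norm_num)]
    norm_num
    ring
  rw [h]
  linarith [log23_2]

lemma Ff'_c1_nonneg : 0 ≤ Ff' (5 / 6) := by rw [Ff'_c1]; linarith [log11_le]

lemma Ff'_c1_le : Ff' (5 / 6) ≤ 1 / 100 := by rw [Ff'_c1]; linarith [log11_ge]

lemma lam_c1_pow : Lam (5 / 6) ^ (6 : ℕ) = 5 ^ 12 / 11 ^ 11 := by
  have h : Lam (5 / 6) = (1/6 : ℝ) ^ (-(1/6) : ℝ) * (11/6 : ℝ) ^ (-(11/6) : ℝ) * (5/6 : ℝ) ^ (2:ℕ) := by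
    show ((1:ℝ) - 5/6) ^ (((5:ℝ)/6 - 1) : ℝ) * ((1:ℝ) + 5/6) ^ (((-1:ℝ) - 5/6) : ℝ) * ((5:ℝ)/6) ^ (2:ℕ) = _
    norm_num
  rw [h, mul_pow, mul_pow, ← pow_mul,
    ← Real.rpow_natCast ((1/6 : ℝ) ^ (-(1/6) : ℝ)) 6,
    ← Real.rpow_mul (by norm_num : (0:ℝ) ≤ 1/6),
    ← Real.rpow_natCast ((11/6 : ℝ) ^ (-(11/6) : ℝ)) 6,
    ← Real.rpow_mul (by norm_num : (0:ℝ) ≤ 11/6),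
    show (-(1/6) * ((6:ℕ):ℝ)) = ((-1 : ℤ) : ℝ) by push_cast; ring,
    show (-(11/6) * ((6:ℕ):ℝ)) = ((-11 : ℤ) : ℝ) by push_cast; ring,
    Real.rpow_intCast, Real.rpow_intCast]
  norm_num

lemma lam_nonneg : 0 ≤ Lam (5/6) := by
  rw [lam_eq (by norm_num) (by norm_num)]
  exact (Real.exp_pos _).le

lemma lam_c1_lb : (0.308 : ℝ) < Lam (5 / 6) := by
  apply lt_of_pow_lt_pow_left₀ 6 lam_nonneg
  rw [lam_c1_pow]
  norm_num

lemma lam_c1_ub : Lam (5 / 6) < 0.3082 := by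
  apply lt_of_pow_lt_pow_left₀ 6 (by norm_num)
  rw [lam_c1_pow]
  norm_num

lemma F_left {s : ℝ} (h0 : 0 < s) (hs : s ≤ 5 / 6) : Ff s ≤ Ff (5 / 6) := by
  have key : MonotoneOn Ff (Set.Icc s (5 / 6)) := by
    apply monotoneOn_of_deriv_nonneg (convex_Icc _ _)
    · intro x hx
      exact (hasDerivAt_Ff (lt_of_lt_of_le h0 hx.1)
        (lt_of_le_of_lt hx.2 (by norm_num))).continuousAt.continuousWithinAt
    · intro x hx
      rw [interior_Icc] at hx
      exact (hasDerivAt_Ff (lt_trans h0 hx.1)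
        (lt_trans hx.2 (by norm_num))).differentiableAt.differentiableWithinAt
    · intro x hx
      rw [interior_Icc] at hx
      have hd := hasDerivAt_Ff (lt_trans h0 hx.1) (lt_trans hx.2 (by norm_num))
      rw [hd.deriv]
      have := Ff'_anti (lt_trans h0 hx.1) hx.2.le (by norm_num : (5:ℝ)/6 < 1)
      linarith [Ff'_c1_nonneg]
  exact key (Set.left_mem_Icc.2 hs) (Set.right_mem_Icc.2 hs) hs

lemma F_slope {s : ℝ} (h1 : 5 / 6 ≤ s) (h2 : s ≤ 21 / 25) :
    Ff s ≤ Ff (5 / 6) + (1 / 100) * (s - 5 / 6) := by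
  set g : ℝ → ℝ := fun t => (1 / 100) * t - Ff t with hg
  have key : MonotoneOn g (Set.Icc (5 / 6) (21 / 25)) := by
    apply monotoneOn_of_deriv_nonneg (convex_Icc _ _)
    · intro x hx
      have hx0 : (0:ℝ) < x := lt_of_lt_of_le (by norm_num) hx.1
      have hx1 : x < 1 := lt_of_le_of_lt hx.2 (by norm_num)
      exact (((hasDerivAt_id x).const_mul (1/100 : ℝ)).sub
        (hasDerivAt_Ff hx0 hx1)).continuousAt.continuousWithinAt
    · intro x hx
      rw [interior_Icc] at hx
      have hx0 : (0:ℝ) < x := lt_trans (by norm_num) hx.1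
      have hx1 : x < 1 := lt_trans hx.2 (by norm_num)
      exact (((hasDerivAt_id x).const_mul (1/100 : ℝ)).sub
        (hasDerivAt_Ff hx0 hx1)).differentiableAt.differentiableWithinAt
    · intro x hx
      rw [interior_Icc] at hx
      have hx0 : (0:ℝ) < x := lt_trans (by norm_num) hx.1
      have hx1 : x < 1 := lt_trans hx.2 (by norm_num)
      have hd : HasDerivAt g ((1:ℝ)/100 * 1 - Ff' x) x :=
        ((hasDerivAt_id x).const_mul (1/100 : ℝ)).sub (hasDerivAt_Ff hx0 hx1)
      rw [hd.deriv]
      have := Ff'_anti (by norm_num : (0:ℝ) < 5/6) hx.1.le hx1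
      have h100 := Ff'_c1_le
      simp only [mul_one]
      linarith
  have := key (Set.left_mem_Icc.2 (by norm_num)) ⟨h1, h2⟩ h1
  simp only [hg] at this
  linarith

lemma F_right {s : ℝ} (h1 : 21 / 25 ≤ s) (hs : s < 1) : Ff s ≤ Ff (21 / 25) := by
  have key : AntitoneOn Ff (Set.Icc (21 / 25) s) := by
    apply antitoneOn_of_deriv_nonpos (convex_Icc _ _)
    · intro x hx
      exact (hasDerivAt_Ff (lt_of_lt_of_le (by norm_num) hx.1)
        (lt_of_le_of_lt hx.2 hs)).continuousAt.continuousWithinAt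
    · intro x hx
      rw [interior_Icc] at hx
      exact (hasDerivAt_Ff (lt_trans (by norm_num) hx.1)
        (lt_trans hx.2 hs)).differentiableAt.differentiableWithinAt
    · intro x hx
      rw [interior_Icc] at hx
      have hd := hasDerivAt_Ff (lt_trans (by norm_num) hx.1) (lt_trans hx.2 hs)
      rw [hd.deriv]
      have := Ff'_anti (by norm_num : (0:ℝ) < 21/25) hx.1.le (lt_trans hx.2 hs)
      linarith [Ff'_c2]
  exact key (Set.left_mem_Icc.2 h1) (Set.right_mem_Icc.2 h1) h1

theorem stmt13 :
    ∃ t ∈ Set.Ioo (0 : ℝ) 1,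
      (∀ s ∈ Set.Ioo (0 : ℝ) 1, Lam s ≤ Lam t) ∧
      0.308 < Lam t ∧ Lam t < 0.309 := by
  have hFcont : ContinuousOn Ff (Set.Icc (5/6 : ℝ) (21/25)) := fun x hx =>
    (hasDerivAt_Ff (lt_of_lt_of_le (by norm_num) hx.1)
      (lt_of_le_of_lt hx.2 (by norm_num))).continuousAt.continuousWithinAt
  have hcont : ContinuousOn Lam (Set.Icc (5/6 : ℝ) (21/25)) :=
    (Real.continuous_exp.comp_continuousOn hFcont).congr (fun x hx =>
      lam_eq (lt_of_lt_of_le (by norm_num) hx.1) (lt_of_le_of_lt hx.2 (by norm_num)))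
  obtain ⟨t₀, ht₀, hmax⟩ := isCompact_Icc.exists_isMaxOn
    (Set.nonempty_Icc.2 (by norm_num)) hcont
  have hmax' : ∀ y ∈ Set.Icc (5/6 : ℝ) (21/25), Lam y ≤ Lam t₀ := hmax
  have ht₀0 : (0:ℝ) < t₀ := lt_of_lt_of_le (by norm_num) ht₀.1
  have ht₀1 : t₀ < 1 := lt_of_le_of_lt ht₀.2 (by norm_num)
  have hc1mem : (5/6 : ℝ) ∈ Set.Icc (5/6 : ℝ) (21/25) := Set.left_mem_Icc.2 (by norm_num)
  have hc2mem : (21/25 : ℝ) ∈ Set.Icc (5/6 : ℝ) (21/25) := Set.right_mem_Icc.2 (by norm_num)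
  have hLc1 : Lam (5/6) ≤ Lam t₀ := hmax' _ hc1mem
  have hLc2 : Lam (21/25) ≤ Lam t₀ := hmax' _ hc2mem
  refine ⟨t₀, ⟨ht₀0, ht₀1⟩, ?_, ?_, ?_⟩
  · intro s hs
    rcases le_or_gt s (5/6) with h | h
    · have hF := F_left hs.1 h
      calc Lam s = Real.exp (Ff s) := lam_eq hs.1 hs.2
        _ ≤ Real.exp (Ff (5/6)) := Real.exp_le_exp.2 hF
        _ = Lam (5/6) := (lam_eq (by norm_num) (by norm_num)).symm
        _ ≤ Lam t₀ := hLc1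
    · rcases le_or_gt s (21/25) with h2 | h2
      · exact hmax' _ ⟨h.le, h2⟩
      · have hF := F_right h2.le hs.2
        calc Lam s = Real.exp (Ff s) := lam_eq hs.1 hs.2
          _ ≤ Real.exp (Ff (21/25)) := Real.exp_le_exp.2 hF
          _ = Lam (21/25) := (lam_eq (by norm_num) (by norm_num)).symm
          _ ≤ Lam t₀ := hLc2
  · exact lt_of_lt_of_le lam_c1_lb hLc1
  · have hF := F_slope ht₀.1 ht₀.2
    have hF2 : Ff t₀ ≤ Ff (5/6) + 1/15000 := by
      have : (1/100 : ℝ) * (t₀ - 5/6) ≤ 1/15000 := by nlinarith [ht₀.2]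
      linarith
    have hexp : Real.exp (1/15000 : ℝ) ≤ 15000/14999 := by
      have hE := Real.exp_pos (1/15000 : ℝ)
      have h1 := Real.add_one_le_exp (-(1/15000) : ℝ)
      rw [Real.exp_neg] at h1
      have h3 := mul_le_mul_of_nonneg_left h1 hE.le
      rw [mul_inv_cancel₀ hE.ne'] at h3
      linarith
    have hub : Real.exp (Ff (5/6)) < 0.3082 := by
      rw [← lam_eq (by norm_num) (by norm_num)]
      exact lam_c1_ub
    calc Lam t₀ = Real.exp (Ff t₀) := lam_eq ht₀0 ht₀1
      _ ≤ Real.exp (Ff (5/6) + 1/15000) := Real.exp_le_exp.2 hF2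
      _ = Real.exp (Ff (5/6)) * Real.exp (1/15000) := Real.exp_add _ _
      _ ≤ Real.exp (Ff (5/6)) * (15000/14999) :=
          mul_le_mul_of_nonneg_left hexp (Real.exp_pos _).le
      _ < 0.3082 * (15000/14999) :=
          mul_lt_mul_of_pos_right hub (by norm_num)
      _ < 0.309 := by norm_num
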